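/- Let P_{k-1}, P_k, P_{k+1} be monic quadratic polynomials P_j(z) = z² + a_j z + b_j, and let p be a root of P_k with 2p + a_k ≠ 0. If P_{k-1}(p) ≠ 0 and P_{k+1}(p) ≠ 0, then the relation 2/(2p + a_k) - P_{k-1}'(p)/P_{k-1}(p) - P_{k+1}'(p)/P_{k+1}(p) = 0 is equivalent to A_k p + B_k = 0, where A_k = -(a_{k-1} - a_k)(a_k a_{k+1} - 4b_k) - (a_{k+1} - a_k)(a_k a_{k-1} - 4b_k) + 2(a_k - a_{k-1})(a_k - a_{k+1})a_k and B_k = 2(a_k - a_{k-1})(a_k - a_{k+1})b_k + 2(b_{k-1} - b_k)(b_{k+1} - b_k) - (a_k a_{k-1} - 4b_k)(b_{k+1} - b_k) - (a_k a_{k+1} - 4b_k)(b_{k-1} - b_k). -/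
import Mathlib


theorem stmt_15 (akm ak akp bkm bk bkp p : ℂ)
    (hroot : p ^ 2 + ak * p + bk = 0)
    (hden : 2 * p + ak ≠ 0)
    (hm : p ^ 2 + akm * p + bkm ≠ 0)
    (hp1 : p ^ 2 + akp * p + bkp ≠ 0)
    (A B : ℂ)
    (hA : A = -(akm - ak) * (ak * akp - 4 * bk) - (akp - ak) * (ak * akm - 4 * bk)
      + 2 * (ak - akm) * (ak - akp) * ak)
    (hB : B = 2 * (ak - akm) * (ak - akp) * bk + 2 * (bkm - bk) * (bkp - bk)
      - (ak * akm - 4 * bk) * (bkp - bk) - (ak * akp - 4 * bk) * (bkm - bk)) :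
    (2 / (2 * p + ak) - (2 * p + akm) / (p ^ 2 + akm * p + bkm)
        - (2 * p + akp) / (p ^ 2 + akp * p + bkp) = 0)
      ↔ A * p + B = 0 := by
  subst hA hB
  rw [sub_sub, sub_eq_zero, div_add_div _ _ hm hp1, div_eq_div_iff hden (mul_ne_zero hm hp1)]
  constructor
  · intro h
    linear_combination h - (-6*p^2 - 2*bkp + 6*bk - 2*bkm - 4*akp*p + 2*ak*p + ak*akp
      - 2*ak^2 - 4*akm*p - 2*akm*akp + akm*ak) * hroot
  · intro h
    linear_combination h + (-6*p^2 - 2*bkp + 6*bk - 2*bkm - 4*akp*p + 2*ak*p + ak*akp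
      - 2*ak^2 - 4*akm*p - 2*akm*akp + akm*ak) * hroot
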